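/- arXiv:2012.02633 — 2 statements merged into one kernel-verified Lean document; each statement's English description precedes it below -/
import Mathlib

section
/- The function K_cv(x) = ρ * arctan(x/λ) / (π/2 - arctan(x/λ)) with ρ, λ > 0 is strictly convex on (0,∞), i.e., its second derivative is strictly positive for all x > 0. -/
open Real Set

lemma u_pos (lam x : ℝ) : 0 < π / 2 - Real.arctan (x / lam) :=
  sub_pos.mpr (Real.arctan_lt_pi_div_two _)

lemma arctan_lt_self {t : ℝ} (ht : 0 < t) : Real.arctan t < t := by
  have h1 : 0 < Real.arctan t := by
    rw [← Real.arctan_zero]; exact Real.arctan_strictMono ht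
  have h2 := Real.arctan_lt_pi_div_two t
  have := Real.lt_tan h1 h2
  rwa [Real.tan_arctan] at this

lemma key_ineq (lam : ℝ) (hlam : 0 < lam) {x : ℝ} (hx : 0 < x) :
    x * (π / 2 - Real.arctan (x / lam)) < lam := by
  have hxl : 0 < x / lam := div_pos hx hlam
  have h1 : π / 2 - Real.arctan (x / lam) = Real.arctan (lam / x) := by
    rw [show lam / x = (x / lam)⁻¹ by rw [inv_div], Real.arctan_inv_of_pos hxl]
  rw [h1]
  have := arctan_lt_self (div_pos hlam hx)
  calc x * Real.arctan (lam / x) < x * (lam / x) := by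
        exact mul_lt_mul_of_pos_left this hx
    _ = lam := by field_simp

section derivs

variable (ρ lam : ℝ)

noncomputable def u (x : ℝ) : ℝ := π / 2 - Real.arctan (x / lam)

lemma hasDerivAt_u (hlam : 0 < lam) (x : ℝ) :
    HasDerivAt (u lam) (-(lam / (lam ^ 2 + x ^ 2))) x := by
  have h1 : HasDerivAt (fun x : ℝ => x / lam) (1 / lam) x := by
    simpa using (hasDerivAt_id x).div_const lam
  have h2 := (Real.hasDerivAt_arctan (x / lam)).comp x h1
  have h3 : HasDerivAt (fun x : ℝ => Real.arctan (x / lam))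
      (lam / (lam ^ 2 + x ^ 2)) x := by
    refine h2.congr_deriv (Eq.symm ?_)
    have hd : (lam : ℝ) ^ 2 + x ^ 2 ≠ 0 := by positivity
    field_simp
  exact ((hasDerivAt_const x (π / 2)).sub h3).congr_deriv (zero_sub _)

lemma funeq (x : ℝ) :
    ρ * Real.arctan (x / lam) / (π / 2 - Real.arctan (x / lam))
      = ρ * (π / 2) * (u lam x)⁻¹ - ρ := by
  have h := (u_pos lam x).ne'
  rw [u]
  set a := Real.arctan (x / lam) with ha
  rw [div_eq_iff h, sub_mul, mul_assoc, inv_mul_cancel₀ h]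
  ring

lemma hasDerivAt_f (hlam : 0 < lam) (x : ℝ) :
    HasDerivAt (fun x : ℝ => ρ * Real.arctan (x / lam) / (π / 2 - Real.arctan (x / lam)))
      (ρ * (π / 2) * (lam / (lam ^ 2 + x ^ 2)) / (u lam x) ^ 2) x := by
  have hu := hasDerivAt_u lam hlam x
  have hne : u lam x ≠ 0 := (u_pos lam x).ne'
  have h1 : HasDerivAt (fun x => (u lam x)⁻¹)
      (-(-(lam / (lam ^ 2 + x ^ 2))) / (u lam x) ^ 2) x := hu.inv hne
  have h2 := ((h1.const_mul (ρ * (π / 2))).sub_const ρ)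
  have heq : (fun x : ℝ => ρ * Real.arctan (x / lam) / (π / 2 - Real.arctan (x / lam)))
      = fun x => ρ * (π / 2) * (u lam x)⁻¹ - ρ := funext (funeq ρ lam)
  rw [heq]
  refine h2.congr_deriv (Eq.symm ?_)
  ring

lemma deriv_f (hlam : 0 < lam) :
    deriv (fun x : ℝ => ρ * Real.arctan (x / lam) / (π / 2 - Real.arctan (x / lam)))
      = fun x => ρ * (π / 2) * lam / ((lam ^ 2 + x ^ 2) * (u lam x) ^ 2) := by
  funext x
  rw [(hasDerivAt_f ρ lam hlam x).deriv]
  have h1 : (lam : ℝ) ^ 2 + x ^ 2 ≠ 0 := by positivity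
  have h2 : u lam x ≠ 0 := (u_pos lam x).ne'
  field_simp
  try exact Or.inl (by ring)
  try ring

lemma hasDerivAt_f' (hlam : 0 < lam) (x : ℝ) :
    HasDerivAt (fun x => ρ * (π / 2) * lam / ((lam ^ 2 + x ^ 2) * (u lam x) ^ 2))
      (ρ * (π / 2) * lam * (2 * lam * u lam x - 2 * x * (u lam x) ^ 2)
        / ((lam ^ 2 + x ^ 2) * (u lam x) ^ 2) ^ 2) x := by
  have hu := hasDerivAt_u lam hlam x
  have hne : u lam x ≠ 0 := (u_pos lam x).ne'
  have hd : (lam : ℝ) ^ 2 + x ^ 2 ≠ 0 := by positivity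
  have hp : HasDerivAt (fun x : ℝ => lam ^ 2 + x ^ 2) (2 * x) x := by
    exact ((hasDerivAt_const x (lam ^ 2)).add ((hasDerivAt_pow 2 x))).congr_deriv (by norm_num)
  have hu2 : HasDerivAt (fun x => (u lam x) ^ 2)
      (2 * u lam x * (-(lam / (lam ^ 2 + x ^ 2)))) x := by
    exact (hu.pow 2).congr_deriv (by norm_num)
  have hv : HasDerivAt (fun x => (lam ^ 2 + x ^ 2) * (u lam x) ^ 2)
      (2 * x * (u lam x) ^ 2 + (lam ^ 2 + x ^ 2) * (2 * u lam x * (-(lam / (lam ^ 2 + x ^ 2))))) x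
    := hp.mul hu2
  have hvne : (lam ^ 2 + x ^ 2) * (u lam x) ^ 2 ≠ 0 := mul_ne_zero hd (pow_ne_zero 2 hne)
  have h := (hv.inv hvne).const_mul (ρ * (π / 2) * lam)
  have heq : (fun x => ρ * (π / 2) * lam / ((lam ^ 2 + x ^ 2) * (u lam x) ^ 2))
      = fun x => ρ * (π / 2) * lam * ((lam ^ 2 + x ^ 2) * (u lam x) ^ 2)⁻¹ := by
    funext y; rw [div_eq_mul_inv]
  rw [heq]
  refine h.congr_deriv (Eq.symm ?_)
  rw [div_eq_mul_inv]
  have : (2 * x * (u lam x) ^ 2 + (lam ^ 2 + x ^ 2) * (2 * u lam x * (-(lam / (lam ^ 2 + x ^ 2)))))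
      = 2 * x * (u lam x) ^ 2 - 2 * lam * u lam x := by
    field_simp
    ring
  rw [this]
  field_simp
  try ring

end derivs

/-- `K_cv(x) = ρ * arctan(x/λ)/(π/2 - arctan(x/λ))` with `ρ, λ > 0` is strictly convex
on `(0,∞)`, i.e. its second derivative is strictly positive for all `x > 0`. -/
theorem Kcv_strictConvex (ρ lam : ℝ) (hρ : 0 < ρ) (hlam : 0 < lam) :
    StrictConvexOn ℝ (Set.Ioi (0 : ℝ))
      (fun x : ℝ => ρ * Real.arctan (x / lam) / (π / 2 - Real.arctan (x / lam))) ∧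
    ∀ x : ℝ, 0 < x →
      0 < deriv (deriv
        (fun x : ℝ => ρ * Real.arctan (x / lam) / (π / 2 - Real.arctan (x / lam)))) x := by
  have hpos : ∀ x : ℝ, 0 < x →
      0 < deriv (deriv
        (fun x : ℝ => ρ * Real.arctan (x / lam) / (π / 2 - Real.arctan (x / lam)))) x := by
    intro x hx
    rw [deriv_f ρ lam hlam, (hasDerivAt_f' ρ lam hlam x).deriv]
    have hu := u_pos lam x
    have hkey := key_ineq lam hlam hx
    have hnum : 0 < 2 * lam * u lam x - 2 * x * (u lam x) ^ 2 := by
      have hux : u lam x = π / 2 - Real.arctan (x / lam) := rfl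
      rw [hux]
      nlinarith [mul_pos hu (sub_pos.mpr hkey)]
    have hd : (0:ℝ) < lam ^ 2 + x ^ 2 := by positivity
    have : 0 < ((lam ^ 2 + x ^ 2) * (u lam x) ^ 2) ^ 2 := by positivity
    have hc : 0 < ρ * (π / 2) * lam := by positivity
    positivity
  refine ⟨?_, hpos⟩
  apply strictConvexOn_of_deriv2_pos (convex_Ioi 0)
  · apply Continuous.continuousOn
    apply Continuous.div
    · exact continuous_const.mul (Real.continuous_arctan.comp (continuous_id.div_const lam))
    · exact continuous_const.sub (Real.continuous_arctan.comp (continuous_id.div_const lam))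
    · intro x; exact (u_pos lam x).ne'
  · intro x hx
    rw [interior_Ioi] at hx
    simpa [Function.iterate_succ, Function.comp] using hpos x hx
end

section
/- Consider ṡ = u + d with the integral sliding mode controller u = -φ(t) - K_bf(|e|)·sign(e), where e(t) = s(t) - z(t), ż(t) = -φ(t), z(0) = s(0), K_bf is class K∞, and |d(t)| ≤ d̄. Then |e(t)| ≤ σ₁ = K_bf⁻¹(d̄) for all t ≥ 0; moreover, if |z(t)| ≤ σ_z for all t ≥ t_f, then |s(t)| ≤ σ₁ + σ_z for all t ≥ t_f. -/
open Real Set Filter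

/-- If `e 0 ≤ σ` and the derivative of `e` is nonpositive wherever `e > σ` (for `t ≥ 0`),
then `e t ≤ σ` for all `t ≥ 0`. -/
lemma aux_bound (e e' : ℝ → ℝ) (σ : ℝ)
    (h0 : e 0 ≤ σ)
    (hder : ∀ t : ℝ, 0 ≤ t → HasDerivAt e (e' t) t)
    (hneg : ∀ t : ℝ, 0 ≤ t → σ < e t → e' t ≤ 0) :
    ∀ t : ℝ, 0 ≤ t → e t ≤ σ := by
  intro t₁ ht₁
  by_contra hgt
  push_neg at hgt
  -- continuous extension of `e` to all of ℝ
  set E : ℝ → ℝ := fun t => e (max t 0) with hE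
  have hEcont : Continuous E := by
    rw [continuous_iff_continuousAt]
    intro x
    have h1 : ContinuousAt (fun t : ℝ => max t 0) x :=
      (continuous_id.max continuous_const).continuousAt
    have h2 : ContinuousAt e (max x 0) :=
      (hder _ (le_max_right x 0)).continuousAt
    exact ContinuousAt.comp (f := fun t : ℝ => max t 0) h2 h1
  set S : Set ℝ := Set.Icc 0 t₁ ∩ E ⁻¹' (Set.Iic σ) with hS
  have hScomp : IsCompact S :=
    isCompact_Icc.inter_right (isClosed_Iic.preimage hEcont)
  have h0S : (0 : ℝ) ∈ S := by
    constructor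
    · exact ⟨le_rfl, ht₁⟩
    · simpa [hE] using h0
  set t₀ : ℝ := sSup S with ht₀
  have ht₀S : t₀ ∈ S := hScomp.sSup_mem ⟨0, h0S⟩
  obtain ⟨⟨ht₀0, ht₀t₁⟩, ht₀e⟩ := ht₀S
  have hEt₀ : e t₀ ≤ σ := by simpa [hE, max_eq_left ht₀0] using ht₀e
  have ht₀lt : t₀ < t₁ := by
    rcases lt_or_eq_of_le ht₀t₁ with h | h
    · exact h
    · exact absurd (h ▸ hEt₀) (not_le.mpr hgt)
  -- on (t₀, t₁), e > σ
  have hmid : ∀ x ∈ Set.Ioo t₀ t₁, σ < e x := by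
    intro x ⟨hx1, hx2⟩
    by_contra hle
    push_neg at hle
    have hx0 : (0 : ℝ) ≤ x := le_trans ht₀0 hx1.le
    have hxS : x ∈ S := ⟨⟨hx0, hx2.le⟩, by simpa [hE, max_eq_left hx0] using hle⟩
    exact absurd (le_csSup hScomp.bddAbove hxS) (not_le.mpr hx1)
  -- e is antitone on [t₀, t₁]
  have hanti : AntitoneOn e (Set.Icc t₀ t₁) := by
    apply antitoneOn_of_deriv_nonpos (convex_Icc _ _)
    · intro x ⟨hx1, _⟩
      exact (hder x (le_trans ht₀0 hx1)).continuousAt.continuousWithinAt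
    · rw [interior_Icc]
      intro x hx
      exact (hder x (le_trans ht₀0 hx.1.le)).differentiableAt.differentiableWithinAt
    · rw [interior_Icc]
      intro x hx
      rw [(hder x (le_trans ht₀0 hx.1.le)).deriv]
      exact hneg x (le_trans ht₀0 hx.1.le) (hmid x hx)
  have := hanti ⟨le_rfl, ht₀lt.le⟩ ⟨ht₀lt.le, le_rfl⟩ ht₀lt.le
  exact absurd (le_trans this hEt₀) (not_le.mpr hgt)

/-- Barrier-function adaptive integral sliding mode control with auxiliary dynamics:
the error `e = s - z` stays in `|e| ≤ σ₁ = K_bf⁻¹(d̄)` for all `t ≥ 0`, and if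
`|z(t)| ≤ σ_z` for `t ≥ t_f`, then `|s(t)| ≤ σ₁ + σ_z` for `t ≥ t_f`. -/
theorem integral_asmc (K : ℝ → ℝ)
    (hmaps : ∀ x : ℝ, 0 ≤ x → 0 ≤ K x)
    (hcont : ContinuousOn K (Set.Ici 0))
    (hmono : StrictMonoOn K (Set.Ici 0))
    (hK0 : K 0 = 0)
    (htop : Tendsto K atTop atTop)
    (d φ : ℝ → ℝ) (dbar : ℝ) (hdbar : 0 < dbar)
    (hdmeas : Measurable d) (hφmeas : Measurable φ)
    (hd : ∀ t : ℝ, 0 ≤ t → |d t| ≤ dbar)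
    (σ₁ : ℝ) (hσ₁ : 0 ≤ σ₁) (hσ₁K : K σ₁ = dbar)  -- σ₁ = K⁻¹(d̄)
    (s z : ℝ → ℝ)
    (hz0 : z 0 = s 0)
    (hz : ∀ t : ℝ, 0 ≤ t → HasDerivAt z (-(φ t)) t)
    (hs : ∀ t : ℝ, 0 ≤ t →
      HasDerivAt s
        (-(φ t) - K |s t - z t| * Real.sign (s t - z t) + d t) t) :
    (∀ t : ℝ, 0 ≤ t → |s t - z t| ≤ σ₁) ∧
    (∀ σ_z t_f : ℝ, 0 ≤ t_f → (∀ t : ℝ, t_f ≤ t → |z t| ≤ σ_z) →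
      ∀ t : ℝ, t_f ≤ t → |s t| ≤ σ₁ + σ_z) := by
  set e : ℝ → ℝ := fun t => s t - z t with he
  set e' : ℝ → ℝ := fun t => -(K |e t| * Real.sign (e t)) + d t with he'
  have hde : ∀ t : ℝ, 0 ≤ t → HasDerivAt e (e' t) t := by
    intro t ht
    have := (hs t ht).sub (hz t ht)
    refine (this.congr_deriv (Eq.symm ?_) : HasDerivAt (s - z) (e' t) t)
    simp [he', he]
    ring
  have he0 : e 0 = 0 := by simp [he, hz0]
  -- upper bound
  have hup : ∀ t : ℝ, 0 ≤ t → e t ≤ σ₁ := by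
    refine aux_bound e e' σ₁ (by simp [he0, hσ₁]) hde ?_
    intro t ht hlt
    have hpos : 0 < e t := lt_of_le_of_lt hσ₁ hlt
    have hKle : K σ₁ ≤ K (e t) :=
      (hmono.monotoneOn hσ₁ hpos.le hlt.le)
    have hdle : d t ≤ dbar := (abs_le.mp (hd t ht)).2
    have : e' t = -(K (e t)) + d t := by
      simp [he', abs_of_pos hpos, Real.sign_of_pos hpos]
    rw [this]
    linarith [hσ₁K ▸ hKle]
  -- lower bound
  have hlo : ∀ t : ℝ, 0 ≤ t → -σ₁ ≤ e t := by
    have : ∀ t : ℝ, 0 ≤ t → -e t ≤ σ₁ := by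
      refine aux_bound (fun t => -(e t)) (fun t => -(e' t)) σ₁
        (by simp [he0, hσ₁]) (fun t ht => (hde t ht).neg) ?_
      intro t ht hlt
      have hneg : e t < 0 := by
        have : σ₁ < -e t := hlt
        linarith
      have hKle : K σ₁ ≤ K (-e t) := by
        have : σ₁ ≤ -e t := le_of_lt hlt
        exact hmono.monotoneOn hσ₁ (by linarith : (0:ℝ) ≤ -e t) this
      have hdge : -dbar ≤ d t := (abs_le.mp (hd t ht)).1
      have hv : e' t = K (-e t) + d t := by
        simp [he', abs_of_neg hneg, Real.sign_of_neg hneg]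
      show -e' t ≤ 0
      rw [hv]
      linarith [hσ₁K ▸ hKle]
    intro t ht
    linarith [this t ht]
  constructor
  · intro t ht
    exact abs_le.mpr ⟨hlo t ht, hup t ht⟩
  · intro σ_z t_f htf hzb t ht
    have h0t : (0:ℝ) ≤ t := le_trans htf ht
    have h1 : |s t - z t| ≤ σ₁ := abs_le.mpr ⟨hlo t h0t, hup t h0t⟩
    have h2 : |z t| ≤ σ_z := hzb t ht
    calc |s t| = |(s t - z t) + z t| := by ring_nf
      _ ≤ |s t - z t| + |z t| := abs_add_le _ _
      _ ≤ σ₁ + σ_z := add_le_add h1 h2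
end
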